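/- Let M_1 and M_2 be matroids on disjoint finite ground sets E_1 and E_2. Suppose P(M_1) = P(N_1) ∪ ⋯ ∪ P(N_t) is a matroid base polytope decomposition of P(M_1) into t ≥ 2 pieces, where N_1,…,N_t are matroids on E_1. For each i let L_i = N_i ⊕ M_2 be the matroid on E_1 ∪ E_2 with bases {X ∪ Y : X a base of N_i, Y a base of M_2}. Then P(M_1 ⊕ M_2) = P(L_1) ∪ ⋯ ∪ P(L_t) is a matroid base polytope decomposition of P(M_1 ⊕ M_2). -/

import Mathlib

open Matroid Set

/-- The rank of a matroid: the supremum of the cardinalities of its independent sets. -/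
noncomputable def mrk {α : Type*} (M : Matroid α) : ℕ :=
  sSup {n : ℕ | ∃ I, M.Indep I ∧ I.ncard = n}

/-- The 0/1 incidence vector of a set. -/
noncomputable def incVec {α : Type*} (B : Set α) : α → ℝ := B.indicator 1

/-- The matroid base polytope: the convex hull of the incidence vectors of the bases. -/
noncomputable def basePolytope {α : Type*} (M : Matroid α) : Set (α → ℝ) :=
  convexHull ℝ {x | ∃ B, M.IsBase B ∧ x = incVec B}

open Pointwise

/-- functions supported in S -/
def supp {α : Type*} (S : Set α) : Set (α → ℝ) := {x | ∀ a ∉ S, x a = 0}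

lemma supp_convex {α : Type*} (S : Set α) : Convex ℝ (supp S) := by
  intro x hx y hy a b _ _ _
  intro c hc
  simp [hx c hc, hy c hc]

lemma basePolytope_subset_supp {α : Type*} (M : Matroid α) :
    basePolytope M ⊆ supp M.E := by
  apply convexHull_min _ (supp_convex M.E)
  rintro x ⟨B, hB, rfl⟩ a ha
  exact Set.indicator_of_notMem (fun hmem => ha (hB.subset_ground hmem)) 1

lemma proj_comb {α : Type*} (S : Set α) (r s : ℝ) (x y : α → ℝ) :
    S.indicator (r • x + s • y) = r • S.indicator x + s • S.indicator y := by
  funext a; by_cases ha : a ∈ S <;>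
    simp [Set.indicator_of_mem, Set.indicator_of_notMem, ha]

lemma proj_add {α : Type*} (S : Set α) (x y : α → ℝ) :
    S.indicator (x + y) = S.indicator x + S.indicator y := by
  funext a; by_cases ha : a ∈ S <;>
    simp [Set.indicator_of_mem, Set.indicator_of_notMem, ha]

lemma proj_of_mem_supp {α : Type*} {S : Set α} {x : α → ℝ} (hx : x ∈ supp S) :
    S.indicator x = x := by
  funext a; by_cases ha : a ∈ S
  · simp [Set.indicator_of_mem ha]
  · simp [Set.indicator_of_notMem ha, hx a ha]

lemma proj_eq_zero {α : Type*} {S T : Set α} (hd : Disjoint S T) {x : α → ℝ}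
    (hx : x ∈ supp T) : S.indicator x = 0 := by
  funext a; by_cases ha : a ∈ S
  · simpa [Set.indicator_of_mem ha] using hx a (disjoint_left.1 hd ha)
  · simp [Set.indicator_of_notMem ha]

/-- decomposition of elements of a Minkowski sum with disjoint supports -/
lemma decomp {α : Type*} {S T : Set α} (hd : Disjoint S T)
    {A C : Set (α → ℝ)} (hA : A ⊆ supp S) (hC : C ⊆ supp T) {x : α → ℝ}
    (hx : x ∈ A + C) : ∃ a ∈ A, ∃ c ∈ C, x = a + c ∧ S.indicator x = a := by
  obtain ⟨a, ha, c, hc, rfl⟩ := hx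
  refine ⟨a, ha, c, hc, rfl, ?_⟩
  rw [proj_add, proj_of_mem_supp (hA ha), proj_eq_zero hd (hC hc), add_zero]

lemma sum_inter {α : Type*} {S T : Set α} (hd : Disjoint S T)
    {A B C : Set (α → ℝ)} (hA : A ⊆ supp S) (hB : B ⊆ supp S) (hC : C ⊆ supp T) :
    (A + C) ∩ (B + C) = (A ∩ B) + C := by
  apply Set.Subset.antisymm
  · rintro x ⟨hx1, hx2⟩
    obtain ⟨a, ha, c, hc, rfl, hpa⟩ := decomp hd hA hC hx1
    obtain ⟨b, hb, c', hc', heq, hpb⟩ := decomp hd hB hC hx2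
    rw [hpa] at hpb
    exact ⟨a, ⟨ha, hpb ▸ hb⟩, c, hc, rfl⟩
  · exact Set.subset_inter (Set.add_subset_add_right inter_subset_left)
      (Set.add_subset_add_right inter_subset_right)

lemma sum_ssubset {α : Type*} {S T : Set α} (hd : Disjoint S T)
    {A B C : Set (α → ℝ)} (hA : A ⊆ supp S) (hB : B ⊆ supp S) (hC : C ⊆ supp T)
    (hAB : A ⊂ B) (hCne : C.Nonempty) : A + C ⊂ B + C := by
  refine ⟨Set.add_subset_add_right hAB.1, fun hsub => ?_⟩
  obtain ⟨b, hbB, hbA⟩ := exists_of_ssubset hAB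
  obtain ⟨c, hc⟩ := hCne
  have hx : b + c ∈ A + C := hsub ⟨b, hbB, c, hc, rfl⟩
  obtain ⟨a, ha, c', hc', heq, hpa⟩ := decomp hd hA hC hx
  have hpb : S.indicator (b + c) = b := by
    rw [proj_add, proj_of_mem_supp (hB hbB), proj_eq_zero hd (hC hc), add_zero]
  rw [hpb] at hpa
  exact hbA (hpa ▸ ha)

lemma sum_extreme {α : Type*} {S T : Set α} (hd : Disjoint S T)
    {A D C : Set (α → ℝ)} (hA : A ⊆ supp S) (hC : C ⊆ supp T)
    (hext : IsExtreme ℝ A D) : IsExtreme ℝ (A + C) (D + C) := by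
  have hD : D ⊆ supp S := hext.1.trans hA
  constructor
  · exact Set.add_subset_add_right hext.1
  · rintro x₁ hx₁ x₂ hx₂ x hx hseg
    obtain ⟨a₁, ha₁, c₁, hc₁, rfl, hp₁⟩ := decomp hd hA hC hx₁
    obtain ⟨a₂, ha₂, c₂, hc₂, rfl, hp₂⟩ := decomp hd hA hC hx₂
    obtain ⟨a, ha, c, hc, rfl, hp⟩ := decomp hd hD hC hx
    obtain ⟨r, s, hr, hs, hrs, hcomb⟩ := hseg
    have hproj : a = r • a₁ + s • a₂ := by
      rw [← hp, ← hp₁, ← hp₂, ← hcomb, proj_comb]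
    have := hext.2 ha₁ ha₂ ha ⟨r, s, hr, hs, hrs, hproj.symm⟩
    exact ⟨a₁, this, c₁, hc₁, rfl⟩

lemma incVec_union {α : Type*} {X Y : Set α} (hd : Disjoint X Y) :
    incVec (X ∪ Y) = incVec X + incVec Y := by
  unfold incVec
  exact Set.indicator_union_of_disjoint hd 1

lemma polytope_sum {α : Type*} {P Q R : Matroid α} (hd : Disjoint Q.E R.E)
    (hb : ∀ B, P.IsBase B ↔ ∃ X Y, Q.IsBase X ∧ R.IsBase Y ∧ B = X ∪ Y) :
    basePolytope P = basePolytope Q + basePolytope R := by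
  rw [basePolytope, basePolytope, basePolytope, ← convexHull_add]
  congr 1
  ext x
  constructor
  · rintro ⟨B, hB, rfl⟩
    obtain ⟨X, Y, hX, hY, rfl⟩ := (hb B).1 hB
    have hdXY : Disjoint X Y := hd.mono hX.subset_ground hY.subset_ground
    exact ⟨incVec X, ⟨X, hX, rfl⟩, incVec Y, ⟨Y, hY, rfl⟩, (incVec_union hdXY).symm⟩
  · rintro ⟨_, ⟨X, hX, rfl⟩, _, ⟨Y, hY, rfl⟩, rfl⟩
    have hdXY : Disjoint X Y := hd.mono hX.subset_ground hY.subset_ground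
    exact ⟨X ∪ Y, (hb _).2 ⟨X, Y, hX, hY, rfl⟩, (incVec_union hdXY).symm⟩

lemma disjointSum_base_char {α : Type*} (M₁ M₂ : Matroid α) (h : Disjoint M₁.E M₂.E) :
    ∀ B, (M₁.disjointSum M₂ h).IsBase B ↔ ∃ X Y, M₁.IsBase X ∧ M₂.IsBase Y ∧ B = X ∪ Y := by
  intro B
  constructor
  · intro hB
    obtain ⟨X, Y, hX, hY, -, rfl⟩ := hB.eq_union_image_of_disjointSum
    exact ⟨X, Y, hX, hY, rfl⟩
  · rintro ⟨X, Y, hX, hY, rfl⟩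
    rw [disjointSum_isBase_iff]
    have h1 : (X ∪ Y) ∩ M₁.E = X := by
      rw [union_inter_distrib_right, inter_eq_self_of_subset_left hX.subset_ground,
        (h.symm.mono_left hY.subset_ground).inter_eq, union_empty]
    have h2 : (X ∪ Y) ∩ M₂.E = Y := by
      rw [union_inter_distrib_right, inter_eq_self_of_subset_left hY.subset_ground,
        (h.mono_left hX.subset_ground).inter_eq, empty_union]
    exact ⟨by rw [h1]; exact hX, by rw [h2]; exact hY, union_subset_union hX.subset_ground hY.subset_ground⟩

/-- a matroid base polytope decomposition `P(M₁) = P(N₁) ∪ ⋯ ∪ P(N_t)`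
induces the decomposition `P(M₁ ⊕ M₂) = P(L₁) ∪ ⋯ ∪ P(L_t)` with `Lᵢ = Nᵢ ⊕ M₂`. -/
theorem statement14 {α : Type*} (M₁ M₂ : Matroid α)
    (hfin₁ : M₁.E.Finite) (hfin₂ : M₂.E.Finite) (h : Disjoint M₁.E M₂.E)
    (t : ℕ) (ht : 2 ≤ t) (N : Fin t → Matroid α) (hNE : ∀ i, (N i).E = M₁.E)
    (hdec : basePolytope M₁ = ⋃ i, basePolytope (N i))
    (hproper : ∀ i, basePolytope (N i) ⊂ basePolytope M₁)
    (hface : ∀ i j, i ≠ j →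
      IsExtreme ℝ (basePolytope (N i)) (basePolytope (N i) ∩ basePolytope (N j)))
    (L : Fin t → Matroid α) (hLE : ∀ i, (L i).E = M₁.E ∪ M₂.E)
    (hL : ∀ i B, (L i).IsBase B ↔ ∃ X Y, (N i).IsBase X ∧ M₂.IsBase Y ∧ B = X ∪ Y) :
    basePolytope (M₁.disjointSum M₂ h) = ⋃ i, basePolytope (L i) ∧
    (∀ i, basePolytope (L i) ⊂ basePolytope (M₁.disjointSum M₂ h)) ∧
    ∀ i j, i ≠ j →
      IsExtreme ℝ (basePolytope (L i)) (basePolytope (L i) ∩ basePolytope (L j)) := by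
  have key : ∀ i, basePolytope (L i) = basePolytope (N i) + basePolytope M₂ := by
    intro i
    have hd : Disjoint (N i).E M₂.E := by rw [hNE i]; exact h
    exact polytope_sum hd (hL i)
  have keyS : basePolytope (M₁.disjointSum M₂ h) = basePolytope M₁ + basePolytope M₂ :=
    polytope_sum h (disjointSum_base_char M₁ M₂ h)
  have hsuppN : ∀ i, basePolytope (N i) ⊆ supp M₁.E := by
    intro i; rw [← hNE i]; exact basePolytope_subset_supp (N i)
  have hsupp2 : basePolytope M₂ ⊆ supp M₂.E := basePolytope_subset_supp M₂
  have hsupp1 : basePolytope M₁ ⊆ supp M₁.E := basePolytope_subset_supp M₁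
  have hCne : (basePolytope M₂).Nonempty := by
    obtain ⟨B, hB⟩ := M₂.exists_isBase
    exact ⟨incVec B, subset_convexHull ℝ _ ⟨B, hB, rfl⟩⟩
  refine ⟨?_, ?_, ?_⟩
  · rw [keyS, hdec, Set.iUnion_add]
    exact Set.iUnion_congr fun i => (key i).symm
  · intro i
    rw [key i, keyS]
    exact sum_ssubset h (hsuppN i) hsupp1 hsupp2 (hproper i) hCne
  · intro i j hij
    rw [key i, key j, sum_inter h (hsuppN i) (hsuppN j) hsupp2]
    exact sum_extreme h (hsuppN i) hsupp2 (hface i j hij)
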